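/- Let k ≥ 1 and W a graphon. Define C₀ as the minimum μ^{⊗k}-relatively complete sub-σ-algebra of 𝓑^{⊗k} whose L² subspace is invariant under every adjacency operator A^W_{ij} (i ≠ j); for n ≥ 0, let C_{n+1} be the intersection of all μ^{⊗k}-relatively complete sub-σ-algebras D ⊇ C_n of 𝓑^{⊗k} satisfying N_j(L²(X^k, C_n, μ^{⊗k})) ⊆ L²(X^k, D, μ^{⊗k}) for every j ∈ {1,…,k}; and let C^k_W be the smallest μ^{⊗k}-relatively complete sub-σ-algebra containing ⋃_{n∈ℕ} C_n. Then C^k_W is the minimum (with respect to inclusion) μ^{⊗k}-relatively complete sub-σ-algebra C of 𝓑^{⊗k} such that L²(X^k, C, μ^{⊗k}) is invariant under every operator of the family 𝕋^k_W. -/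

import Mathlib

open MeasureTheory
open scoped ENNReal
set_option maxHeartbeats 1000000
set_option synthInstance.maxHeartbeats 1000000

noncomputable section

/-- A graphon: symmetric measurable `W : X × X → [0,1]`. -/
structure IsGraphon {X : Type*} [MeasurableSpace X] (W : X → X → ℝ) : Prop where
  measurable : Measurable (Function.uncurry W)
  symm : ∀ x y, W x y = W y x
  nonneg : ∀ x y, 0 ≤ W x y
  le_one : ∀ x y, W x y ≤ 1

/-- A sub-σ-algebra, wrapped in a structure (so that it does not interfere with
instance resolution). -/
structure SubSigma (α : Type*) where
  σ : MeasurableSpace α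

/-- `m'` is a `μ`-relatively complete sub-σ-algebra of the ambient σ-algebra `mα`. -/
def RelComplete {X : Type*} [mα : MeasurableSpace X]
    (μ : Measure X) (m' : SubSigma X) : Prop :=
  ∀ Z Z₀ : Set X, MeasurableSet[mα] Z → MeasurableSet[m'.σ] Z₀ →
    μ (symmDiff Z Z₀) = 0 → MeasurableSet[m'.σ] Z

/-- `L²(X^k, C, μ^{⊗k})` is invariant under every adjacency operator
`A^W_{ij} : f ↦ (x̄ ↦ W(x_i, x_j) · f(x̄))`, `i ≠ j`. -/
def AInvariant {X : Type*} [MeasurableSpace X] (μ : Measure X) (W : X → X → ℝ)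
    {k : ℕ} (C : SubSigma (Fin k → X)) : Prop :=
  ∀ i j : Fin k, i ≠ j → ∀ f : (Fin k → X) → ℝ,
    MemLp f 2 (Measure.pi fun _ : Fin k => μ) →
    AEStronglyMeasurable[C.σ] f (Measure.pi fun _ : Fin k => μ) →
    MemLp (fun x => W (x i) (x j) * f x) 2 (Measure.pi fun _ : Fin k => μ) ∧
      AEStronglyMeasurable[C.σ] (fun x => W (x i) (x j) * f x)
        (Measure.pi fun _ : Fin k => μ)

/-- The neighbor operators `N_j : f ↦ (x̄ ↦ ∫ f(x̄[y/j]) dμ(y))` map `L²(X^k, C, μ^{⊗k})`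
into `L²(X^k, D, μ^{⊗k})`. -/
def NMapsInto {X : Type*} [MeasurableSpace X] (μ : Measure X)
    {k : ℕ} (C D : SubSigma (Fin k → X)) : Prop :=
  ∀ (j : Fin k) (f : (Fin k → X) → ℝ),
    MemLp f 2 (Measure.pi fun _ : Fin k => μ) →
    AEStronglyMeasurable[C.σ] f (Measure.pi fun _ : Fin k => μ) →
    MemLp (fun x => ∫ y, f (Function.update x j y) ∂μ) 2
        (Measure.pi fun _ : Fin k => μ) ∧
      AEStronglyMeasurable[D.σ] (fun x => ∫ y, f (Function.update x j y) ∂μ)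
        (Measure.pi fun _ : Fin k => μ)

/-- The iterative construction: `C₀` is the smallest `μ^{⊗k}`-relatively complete
sub-σ-algebra whose `L²` subspace is invariant under all adjacency operators `A^W_{ij}`,
and `C_{n+1}` is the intersection of all `μ^{⊗k}`-relatively complete `D ⊇ C_n` with
`N_j(L²(C_n)) ⊆ L²(D)` for every `j`. -/
noncomputable def CSeq {X : Type*} [MeasurableSpace X] (μ : Measure X) (W : X → X → ℝ)
    (k : ℕ) : ℕ → MeasurableSpace (Fin k → X)
  | 0 => sInf {m | m ≤ (MeasurableSpace.pi : MeasurableSpace (Fin k → X)) ∧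
      RelComplete (mα := (MeasurableSpace.pi : MeasurableSpace (Fin k → X))) (Measure.pi fun _ : Fin k => μ) ⟨m⟩ ∧ AInvariant μ W ⟨m⟩}
  | (n + 1) => sInf {m | m ≤ (MeasurableSpace.pi : MeasurableSpace (Fin k → X)) ∧
      RelComplete (mα := (MeasurableSpace.pi : MeasurableSpace (Fin k → X))) (Measure.pi fun _ : Fin k => μ) ⟨m⟩ ∧ CSeq μ W k n ≤ m ∧
      NMapsInto μ ⟨CSeq μ W k n⟩ ⟨m⟩}

/-- `C^k_W`: the smallest `μ^{⊗k}`-relatively complete sub-σ-algebra containing all the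
`C_n` of the iterative construction. -/
noncomputable def CLimit {X : Type*} [MeasurableSpace X] (μ : Measure X) (W : X → X → ℝ)
    (k : ℕ) : MeasurableSpace (Fin k → X) :=
  sInf {m | m ≤ (MeasurableSpace.pi : MeasurableSpace (Fin k → X)) ∧
    RelComplete (mα := (MeasurableSpace.pi : MeasurableSpace (Fin k → X))) (Measure.pi fun _ : Fin k => μ) ⟨m⟩ ∧ ∀ n : ℕ, CSeq μ W k n ≤ m}

section helpers

variable {α : Type*} [mα : MeasurableSpace α] {μ : Measure α}

/-- rep trick -/
lemma aesm'_sInf {S : Set (MeasurableSpace α)}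
    (hS : ∀ m ∈ S, m ≤ mα ∧ RelComplete μ ⟨m⟩)
    {f : α → ℝ} (hf : AEStronglyMeasurable f μ)
    (h : ∀ m ∈ S, AEStronglyMeasurable[m] f μ) :
    AEStronglyMeasurable[sInf S] f μ := by
  set g := hf.mk f with hg
  have hfg : f =ᵐ[μ] g := hf.ae_eq_mk
  have hgsm : StronglyMeasurable g := hf.stronglyMeasurable_mk
  have key : ∀ a : ℝ, MeasurableSet[sInf S] (g ⁻¹' Set.Ioi a) := by
    intro a
    rw [MeasurableSpace.measurableSet_sInf]
    intro m hm
    obtain ⟨g₁, hg₁, hfg₁⟩ := h m hm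
    have hgg₁ : g =ᵐ[μ] g₁ := hfg.symm.trans hfg₁
    have hnull0 : μ {x | g x ≠ g₁ x} = 0 := by
      simpa [Filter.EventuallyEq, ae_iff] using hgg₁
    have hnull : μ (symmDiff (g ⁻¹' Set.Ioi a) (g₁ ⁻¹' Set.Ioi a)) = 0 := by
      refine measure_mono_null (fun x hx => ?_) hnull0
      rcases Set.mem_symmDiff.mp hx with ⟨h1, h2⟩ | ⟨h1, h2⟩ <;>
        · intro hgx
          simp only [Set.mem_preimage] at h1 h2
          exact h2 (hgx ▸ h1)
    exact (hS m hm).2 _ _ (hgsm.measurable measurableSet_Ioi) (hg₁.measurable measurableSet_Ioi) hnull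
  have : Measurable[sInf S] g := measurable_of_Ioi key
  exact ⟨g, Measurable.stronglyMeasurable this, hfg⟩


lemma relComplete_sInf {S : Set (MeasurableSpace α)}
    (hS : ∀ m ∈ S, RelComplete μ ⟨m⟩) : RelComplete μ ⟨sInf S⟩ := by
  intro Z Z₀ hZ hZ₀ hnull
  rw [MeasurableSpace.measurableSet_sInf] at hZ₀ ⊢
  exact fun m hm => hS m hm Z Z₀ hZ (hZ₀ m hm) hnull

lemma relComplete_pi : RelComplete μ ⟨mα⟩ := fun _ _ hZ _ _ => hZ

end helpers

section update

variable {X : Type*} [MeasurableSpace X] (μ : Measure X) [IsProbabilityMeasure μ] {k : ℕ}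

lemma measurePreserving_update (j : Fin k) :
    MeasurePreserving (fun p : (Fin k → X) × X => Function.update p.1 j p.2)
      ((Measure.pi fun _ : Fin k => μ).prod μ) (Measure.pi fun _ : Fin k => μ) := by
  classical
  have hmeas : Measurable (fun p : (Fin k → X) × X => Function.update p.1 j p.2) :=
    measurable_update'.comp (measurable_fst.prodMk measurable_snd) |>.comp measurable_id
  refine ⟨hmeas, ?_⟩
  refine (Measure.pi_eq fun s hs => ?_).symm
  rw [Measure.map_apply hmeas (MeasurableSet.univ_pi hs)]
  have hpre : (fun p : (Fin k → X) × X => Function.update p.1 j p.2) ⁻¹'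
      (Set.univ.pi s) = (Set.univ.pi (Function.update s j Set.univ)) ×ˢ (s j) := by
    ext ⟨x, y⟩
    simp only [Set.mem_preimage, Set.mem_pi, Set.mem_univ, true_implies, Set.mem_prod]
    constructor
    · intro h
      refine ⟨fun i => ?_, by simpa using h j⟩
      by_cases hij : i = j
      · subst hij; simp
      · simpa [Function.update_of_ne hij] using h i
    · rintro ⟨h1, h2⟩ i
      by_cases hij : i = j
      · subst hij; simpa using h2
      · have := h1 i
        rw [Function.update_of_ne hij] at this
        rwa [Function.update_of_ne hij]
  rw [hpre, Measure.prod_prod, Measure.pi_pi]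
  have : ∀ i, μ (Function.update s j Set.univ i) =
      Function.update (fun i => μ (s i)) j 1 i := by
    intro i
    by_cases hij : i = j
    · subst hij; simp
    · simp [Function.update_of_ne hij]
  rw [Finset.prod_congr rfl fun i _ => this i,
    Finset.prod_update_of_mem (Finset.mem_univ j), one_mul,
    Finset.sdiff_singleton_eq_erase, Finset.prod_erase_mul _ _ (Finset.mem_univ j)]


lemma N_analysis (j : Fin k) {f : (Fin k → X) → ℝ}
    (hf : MemLp f 2 (Measure.pi fun _ : Fin k => μ)) :
    MemLp (fun x => ∫ y, f (Function.update x j y) ∂μ) 2 (Measure.pi fun _ : Fin k => μ) ∧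
    eLpNorm (fun x => ∫ y, f (Function.update x j y) ∂μ) 2 (Measure.pi fun _ : Fin k => μ)
      ≤ eLpNorm f 2 (Measure.pi fun _ : Fin k => μ) := by
  classical
  set ν := (Measure.pi fun _ : Fin k => μ) with hν
  set Φ := fun p : (Fin k → X) × X => Function.update p.1 j p.2 with hΦdef
  have hΦ : MeasurePreserving Φ (ν.prod μ) ν := measurePreserving_update μ j
  have hfΦ : MemLp (f ∘ Φ) 2 (ν.prod μ) := hf.comp_measurePreserving hΦ
  have hgaesm : AEStronglyMeasurable (f ∘ Φ) (ν.prod μ) := hfΦ.1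
  set N := fun x : Fin k → X => ∫ y, f (Function.update x j y) ∂μ with hNdef
  have hN_aesm : AEStronglyMeasurable N ν := by
    have := hgaesm.integral_prod_right' (μ := ν) (ν := μ)
    exact this
  have hg1 : Integrable (f ∘ Φ) (ν.prod μ) := hfΦ.integrable one_le_two
  have hg2 : Integrable (fun p => (f ∘ Φ) p ^ 2) (ν.prod μ) :=
    (memLp_two_iff_integrable_sq hgaesm).mp hfΦ
  have hae1 : ∀ᵐ x ∂ν, Integrable (fun y => f (Function.update x j y)) μ :=
    hg1.prod_right_ae
  have hae2 : ∀ᵐ x ∂ν, Integrable (fun y => f (Function.update x j y) ^ 2) μ :=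
    hg2.prod_right_ae
  have hbound : ∀ᵐ x ∂ν, N x ^ 2 ≤ ∫ y, f (Function.update x j y) ^ 2 ∂μ := by
    filter_upwards [hae1, hae2] with x h1 h2
    have hmem : MemLp (fun y => f (Function.update x j y)) 2 μ :=
      (memLp_two_iff_integrable_sq h1.aestronglyMeasurable).mpr h2
    have hvar := ProbabilityTheory.variance_nonneg (fun y => f (Function.update x j y)) μ
    rw [ProbabilityTheory.variance_eq_sub hmem] at hvar
    simp only [Pi.pow_apply] at hvar
    simp only [hNdef]
    linarith
  have hmaj : Integrable (fun x => ∫ y, f (Function.update x j y) ^ 2 ∂μ) ν :=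
    hg2.integral_prod_left
  have hNsq_int : Integrable (fun x => N x ^ 2) ν := by
    refine Integrable.mono' hmaj ?_ ?_
    · exact (hN_aesm.mul hN_aesm).congr (by filter_upwards with x; rw [Pi.mul_apply, sq])
    · filter_upwards [hbound, hae2] with x hx h2
      rw [Real.norm_eq_abs, abs_of_nonneg (sq_nonneg _)]
      exact hx
  have hNmem : MemLp N 2 ν := (memLp_two_iff_integrable_sq hN_aesm).mpr hNsq_int
  refine ⟨hNmem, ?_⟩
  have hint_le : ∫ x, N x ^ 2 ∂ν ≤ ∫ z, f z ^ 2 ∂ν := by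
    have step1 : ∫ x, N x ^ 2 ∂ν ≤ ∫ x, ∫ y, f (Function.update x j y) ^ 2 ∂μ ∂ν :=
      integral_mono_ae hNsq_int hmaj hbound
    have step2 : ∫ x, ∫ y, f (Function.update x j y) ^ 2 ∂μ ∂ν
        = ∫ p, (f ∘ Φ) p ^ 2 ∂(ν.prod μ) := by
      exact integral_integral hg2
    have haesm2 : AEStronglyMeasurable (fun z => f z ^ 2) (Measure.map Φ (ν.prod μ)) := by
      rw [hΦ.map_eq]
      exact ((memLp_two_iff_integrable_sq hf.1).mp hf).aestronglyMeasurable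
    have step3 : ∫ p, (f ∘ Φ) p ^ 2 ∂(ν.prod μ) = ∫ z, f z ^ 2 ∂ν := by
      rw [show (∫ z, f z ^ 2 ∂ν) = ∫ z, f z ^ 2 ∂(Measure.map Φ (ν.prod μ)) by rw [hΦ.map_eq],
        integral_map hΦ.measurable.aemeasurable haesm2]
      rfl
    linarith
  rw [hNmem.eLpNorm_eq_integral_rpow_norm (by norm_num) (by norm_num),
    hf.eLpNorm_eq_integral_rpow_norm (by norm_num) (by norm_num)]
  have h2 : (2 : ℝ≥0∞).toReal = (2 : ℝ) := by norm_num
  have hpt : ∀ a : ℝ, ‖a‖ ^ ((2 : ℝ≥0∞).toReal) = a ^ 2 := by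
    intro a
    rw [h2, show (2 : ℝ) = ((2 : ℕ) : ℝ) by norm_num, Real.rpow_natCast,
      Real.norm_eq_abs, sq_abs]
  refine ENNReal.ofReal_le_ofReal ?_
  refine Real.rpow_le_rpow (integral_nonneg fun a => ?_) ?_ (by positivity)
  · rw [hpt]; positivity
  · simp only [hpt]
    exact hint_le


lemma N_slice_int (j : Fin k) {f : (Fin k → X) → ℝ}
    (hf : MemLp f 2 (Measure.pi fun _ : Fin k => μ)) :
    ∀ᵐ x ∂(Measure.pi fun _ : Fin k => μ),
      Integrable (fun y => f (Function.update x j y)) μ :=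
  ((hf.comp_measurePreserving (measurePreserving_update μ j)).integrable
    one_le_two).prod_right_ae

lemma N_sub (j : Fin k) {f g : (Fin k → X) → ℝ}
    (hf : MemLp f 2 (Measure.pi fun _ : Fin k => μ))
    (hg : MemLp g 2 (Measure.pi fun _ : Fin k => μ)) :
    (fun x => ∫ y, (f - g) (Function.update x j y) ∂μ) =ᵐ[Measure.pi fun _ : Fin k => μ]
      (fun x => ∫ y, f (Function.update x j y) ∂μ) -
        fun x => ∫ y, g (Function.update x j y) ∂μ := by
  filter_upwards [N_slice_int μ j hf, N_slice_int μ j hg] with x h1 h2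
  simp only [Pi.sub_apply]
  rw [← integral_sub h1 h2]

lemma N_dist (j : Fin k) {f g : (Fin k → X) → ℝ}
    (hf : MemLp f 2 (Measure.pi fun _ : Fin k => μ))
    (hg : MemLp g 2 (Measure.pi fun _ : Fin k => μ)) :
    eLpNorm ((fun x => ∫ y, f (Function.update x j y) ∂μ) -
        fun x => ∫ y, g (Function.update x j y) ∂μ) 2 (Measure.pi fun _ : Fin k => μ)
      ≤ eLpNorm (f - g) 2 (Measure.pi fun _ : Fin k => μ) := by
  rw [← eLpNorm_congr_ae (N_sub μ j hf hg)]
  exact (N_analysis μ j (hf.sub hg)).2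

lemma aesm'_pi {f : (Fin k → X) → ℝ}
    (h : AEStronglyMeasurable f (Measure.pi fun _ : Fin k => μ)) :
    AEStronglyMeasurable[MeasurableSpace.pi] f (Measure.pi fun _ : Fin k => μ) :=
  ⟨h.mk f, h.stronglyMeasurable_mk, h.ae_eq_mk⟩

end update


section main

variable {X : Type*} [MeasurableSpace X] (μ : Measure X) [IsProbabilityMeasure μ]
  {k : ℕ} (W : X → X → ℝ)

lemma aInvariant_pi (hW : IsGraphon W) :
    AInvariant μ W (k := k) ⟨MeasurableSpace.pi⟩ := by
  intro i j hij f hf hfm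
  have hw : Measurable fun x : Fin k → X => W (x i) (x j) := by
    have := hW.measurable.comp ((measurable_pi_apply (a := i) (X := fun _ : Fin k => X)).prodMk
      (measurable_pi_apply j))
    exact this
  have hbound : ∀ x : Fin k → X, ‖W (x i) (x j) * f x‖ ≤ ‖f x‖ := by
    intro x
    rw [norm_mul]
    have h1 : ‖W (x i) (x j)‖ ≤ 1 := by
      rw [Real.norm_eq_abs, abs_of_nonneg (hW.nonneg _ _)]
      exact hW.le_one _ _
    nlinarith [norm_nonneg (f x), norm_nonneg (W (x i) (x j))]
  have haesm : AEStronglyMeasurable (fun x => W (x i) (x j) * f x)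
      (Measure.pi fun _ : Fin k => μ) := hw.aestronglyMeasurable.mul hf.1
  exact ⟨MemLp.of_le hf haesm (Filter.Eventually.of_forall hbound), aesm'_pi μ haesm⟩

lemma nMapsInto_pi (C : SubSigma (Fin k → X)) :
    NMapsInto μ C ⟨MeasurableSpace.pi⟩ := by
  intro j f hf _
  exact ⟨(N_analysis μ j hf).1, aesm'_pi μ (N_analysis μ j hf).1.1⟩

lemma cSeq_le_pi (hW : IsGraphon W) (n : ℕ) :
    CSeq μ W k n ≤ (MeasurableSpace.pi : MeasurableSpace (Fin k → X)) := by
  induction n with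
  | zero =>
    rw [CSeq]
    exact sInf_le ⟨le_rfl, relComplete_pi, aInvariant_pi μ W hW⟩
  | succ n ih =>
    rw [CSeq]
    exact sInf_le ⟨le_rfl, relComplete_pi, ih, nMapsInto_pi μ _⟩

lemma cSeq_relComplete (n : ℕ) :
    RelComplete (mα := (MeasurableSpace.pi : MeasurableSpace (Fin k → X)))
      (Measure.pi fun _ : Fin k => μ) ⟨CSeq μ W k n⟩ := by
  cases n with
  | zero => rw [CSeq]; exact relComplete_sInf fun m hm => hm.2.1
  | succ n => rw [CSeq]; exact relComplete_sInf fun m hm => hm.2.1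

lemma cSeq_le_succ (n : ℕ) : CSeq μ W k n ≤ CSeq μ W k (n + 1) := by
  conv_rhs => rw [CSeq]
  exact le_sInf fun m hm => hm.2.2.1

lemma cSeq_mono {a b : ℕ} (hab : a ≤ b) : CSeq μ W k a ≤ CSeq μ W k b := by
  induction b with
  | zero => simpa [Nat.le_zero.mp hab]
  | succ b ih =>
    rcases Nat.lt_or_ge a (b+1) with h | h
    · exact (ih (Nat.lt_succ_iff.mp h)).trans (cSeq_le_succ μ W b)
    · have : a = b + 1 := le_antisymm hab h
      simp [this]

lemma aInvariant_cSeq0 (hW : IsGraphon W) : AInvariant μ W (k := k) ⟨CSeq μ W k 0⟩ := by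
  intro i j hij f hf hfm
  have hmem := aInvariant_pi μ W hW i j hij f hf (aesm'_pi μ hf.1)
  refine ⟨hmem.1, ?_⟩
  show AEStronglyMeasurable[CSeq μ W k 0] _ _
  rw [CSeq] at hfm ⊢
  refine aesm'_sInf (fun m hm => ⟨hm.1, hm.2.1⟩) hmem.1.1 fun m hm => ?_
  exact (hm.2.2 i j hij f hf (hfm.mono (sInf_le hm))).2

lemma nMapsInto_cSeq (n : ℕ) :
    NMapsInto μ ⟨CSeq μ W k n⟩ ⟨CSeq μ W k (n + 1)⟩ := by
  intro j f hf hfm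
  refine ⟨(N_analysis μ j hf).1, ?_⟩
  show AEStronglyMeasurable[CSeq μ W k (n + 1)] _ _
  rw [CSeq]
  refine aesm'_sInf (fun m hm => ⟨hm.1, hm.2.1⟩) (N_analysis μ j hf).1.1 fun m hm => ?_
  exact (hm.2.2.2 j f hf hfm).2

lemma cLimit_le_pi (hW : IsGraphon W) :
    CLimit μ W k ≤ (MeasurableSpace.pi : MeasurableSpace (Fin k → X)) :=
  sInf_le ⟨le_rfl, relComplete_pi, fun n => cSeq_le_pi μ W hW n⟩

lemma cLimit_relComplete :
    RelComplete (mα := (MeasurableSpace.pi : MeasurableSpace (Fin k → X)))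
      (Measure.pi fun _ : Fin k => μ) ⟨CLimit μ W k⟩ :=
  relComplete_sInf fun m hm => hm.2.1

lemma cSeq_le_cLimit (n : ℕ) : CSeq μ W k n ≤ CLimit μ W k :=
  le_sInf fun m hm => hm.2.2 n

lemma aInvariant_cLimit (hW : IsGraphon W) : AInvariant μ W (k := k) ⟨CLimit μ W k⟩ := by
  intro i j hij f hf hfm
  have hmem := aInvariant_pi μ W hW i j hij f hf (aesm'_pi μ hf.1)
  refine ⟨hmem.1, ?_⟩
  have h1 : AEStronglyMeasurable[CLimit μ W k] (fun x : Fin k → X => W (x i) (x j))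
      (Measure.pi fun _ : Fin k => μ) := by
    have hone := (aInvariant_cSeq0 μ W hW) i j hij (fun _ => 1) (memLp_const 1)
      ⟨fun _ => 1, stronglyMeasurable_const, Filter.EventuallyEq.rfl⟩
    have h2 := hone.2.congr (f := fun x : Fin k → X => W (x i) (x j) * 1)
      (by filter_upwards with x; ring)
    exact h2.mono (cSeq_le_cLimit μ W 0)
  obtain ⟨w', hw'sm, hww'⟩ := h1
  obtain ⟨f', hf'sm, hff'⟩ := hfm
  refine ⟨fun x => w' x * f' x, hw'sm.mul hf'sm, ?_⟩
  filter_upwards [hww', hff'] with x h1 h2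
  simp only [h1, h2]


lemma cLimit_approx (hW : IsGraphon W) {A : Set (Fin k → X)}
    (hA : MeasurableSet[CLimit μ W k] A) :
    ∃ A₀, MeasurableSet[⨆ n, CSeq μ W k n] A₀ ∧
      (Measure.pi fun _ : Fin k => μ) (symmDiff A A₀) = 0 := by
  classical
  let mt : MeasurableSpace (Fin k → X) :=
    { MeasurableSet' := fun B => MeasurableSet[MeasurableSpace.pi] B ∧
        ∃ B₀, MeasurableSet[⨆ n, CSeq μ W k n] B₀ ∧
          (Measure.pi fun _ : Fin k => μ) (symmDiff B B₀) = 0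
      measurableSet_empty := ⟨MeasurableSet.empty, ∅,
        (⨆ n, CSeq μ W k n).measurableSet_empty, by simp⟩
      measurableSet_compl := by
        rintro B ⟨hB, B₀, hB₀, hnull⟩
        exact ⟨hB.compl, B₀ᶜ, hB₀.compl, by rwa [compl_symmDiff_compl]⟩
      measurableSet_iUnion := by
        intro g hg
        choose hg1 g₀ hg2 hg3 using hg
        refine ⟨MeasurableSet.iUnion hg1, ⋃ n, g₀ n, MeasurableSet.iUnion hg2, ?_⟩
        refine measure_mono_null ?_ (measure_iUnion_null hg3)
        intro x hx
        rw [Set.mem_iUnion]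
        rcases Set.mem_symmDiff.mp hx with ⟨h1, h2⟩ | ⟨h1, h2⟩
        · obtain ⟨n, hn⟩ := Set.mem_iUnion.mp h1
          exact ⟨n, Set.mem_symmDiff.mpr
            (Or.inl ⟨hn, fun hc => h2 (Set.mem_iUnion.mpr ⟨n, hc⟩)⟩)⟩
        · obtain ⟨n, hn⟩ := Set.mem_iUnion.mp h1
          exact ⟨n, Set.mem_symmDiff.mpr
            (Or.inr ⟨hn, fun hc => h2 (Set.mem_iUnion.mpr ⟨n, hc⟩)⟩)⟩ }
  have h1 : mt ≤ (MeasurableSpace.pi : MeasurableSpace (Fin k → X)) := fun s hs => hs.1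
  have h2 : RelComplete (mα := (MeasurableSpace.pi : MeasurableSpace (Fin k → X)))
      (Measure.pi fun _ : Fin k => μ) ⟨mt⟩ := by
    rintro Z Z₀ hZ ⟨hZ₀, A₀, hA₀, hn⟩ hZZ₀
    exact ⟨hZ, A₀, hA₀, measure_mono_null (symmDiff_triangle Z Z₀ A₀)
      (measure_union_null hZZ₀ hn)⟩
  have h3 : ∀ n, CSeq μ W k n ≤ mt := fun n s hs =>
    ⟨cSeq_le_pi μ W hW n s hs, s, (le_iSup (CSeq μ W k) n) s hs, by simp⟩
  exact ((sInf_le ⟨h1, h2, h3⟩ : CLimit μ W k ≤ mt) A hA).2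

lemma setIntegral_iSup_zero (hW : IsGraphon W) {h : (Fin k → X) → ℝ}
    (hint : Integrable h (Measure.pi fun _ : Fin k => μ))
    (hzero : ∀ n (A : Set (Fin k → X)), MeasurableSet[CSeq μ W k n] A →
      ∫ x in A, h x ∂(Measure.pi fun _ : Fin k => μ) = 0) :
    ∀ A : Set (Fin k → X), MeasurableSet[⨆ n, CSeq μ W k n] A →
      ∫ x in A, h x ∂(Measure.pi fun _ : Fin k => μ) = 0 := by
  have hgen : (⨆ n, CSeq μ W k n) = MeasurableSpace.generateFrom
      (⋃ n, {s : Set (Fin k → X) | MeasurableSet[CSeq μ W k n] s}) := by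
    calc (⨆ n, CSeq μ W k n)
        = ⨆ n, MeasurableSpace.generateFrom
            {s : Set (Fin k → X) | MeasurableSet[CSeq μ W k n] s} :=
          iSup_congr fun n => (@MeasurableSpace.generateFrom_measurableSet _ (CSeq μ W k n)).symm
      _ = _ := MeasurableSpace.iSup_generateFrom _
  have hpisys : IsPiSystem (⋃ n, {s : Set (Fin k → X) | MeasurableSet[CSeq μ W k n] s}) := by
    rintro s hs t ht -
    obtain ⟨_, ⟨ns, rfl⟩, hs⟩ := hs
    obtain ⟨_, ⟨nt, rfl⟩, ht⟩ := ht
    exact Set.mem_iUnion.mpr ⟨max ns nt,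
      ((cSeq_mono μ W (le_max_left ns nt)) s hs).inter
        ((cSeq_mono μ W (le_max_right ns nt)) t ht)⟩
  have hsup_le : (⨆ n, CSeq μ W k n) ≤ (MeasurableSpace.pi : MeasurableSpace (Fin k → X)) :=
    iSup_le fun n => cSeq_le_pi μ W hW n
  intro A hA
  refine @MeasurableSpace.induction_on_inter (Fin k → X) (⨆ n, CSeq μ W k n)
    (fun t _ => ∫ x in t, h x ∂(Measure.pi fun _ : Fin k => μ) = 0) _
    hgen hpisys (by simp) ?_ ?_ ?_ A hA
  · rintro t ht
    obtain ⟨_, ⟨n, rfl⟩, ht⟩ := ht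
    exact hzero n t ht
  · intro t htm hteq
    have htm' : MeasurableSet t := hsup_le t htm
    have hsplit := integral_add_compl htm' hint
    have huniv := hzero 0 Set.univ MeasurableSet.univ
    rw [Measure.restrict_univ] at huniv
    linarith
  · intro g hdisj hgm hgeq
    rw [integral_iUnion (fun i => hsup_le _ (hgm i)) hdisj hint.integrableOn]
    simp [hgeq]

lemma nMapsInto_cLimit (hW : IsGraphon W) :
    NMapsInto μ ⟨CLimit μ W k⟩ ⟨CLimit μ W k⟩ := by
  intro j f hf hfm
  refine ⟨(N_analysis μ j hf).1, ?_⟩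
  show AEStronglyMeasurable[CLimit μ W k] _ _
  set ν := (Measure.pi fun _ : Fin k => μ) with hνdef
  have hm : CLimit μ W k ≤ (MeasurableSpace.pi : MeasurableSpace (Fin k → X)) :=
    cLimit_le_pi μ W hW
  set U : Submodule ℝ (Lp ℝ 2 ν) := ⨆ n, lpMeas ℝ ℝ (CSeq μ W k n) 2 ν with hUdef
  set K := U.topologicalClosure with hKdef
  haveI : CompleteSpace K := (U.isClosed_topologicalClosure).completeSpace_coe
  have hlpc : IsClosed ((lpMeas ℝ ℝ (CLimit μ W k) 2 ν :
      Submodule ℝ (Lp ℝ 2 ν)) : Set (Lp ℝ 2 ν)) :=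
    (isComplete_aestronglyMeasurable hm).isClosed
  have hKle : K ≤ lpMeas ℝ ℝ (CLimit μ W k) 2 ν := by
    refine Submodule.topologicalClosure_minimal _ (iSup_le fun n x hx => ?_) hlpc
    exact mem_lpMeas_iff_aestronglyMeasurable.mpr
      ((mem_lpMeas_iff_aestronglyMeasurable.mp hx).mono (cSeq_le_cLimit μ W n))
  set F := hf.toLp f with hFdef
  have hFmem : F ∈ lpMeas ℝ ℝ (CLimit μ W k) 2 ν :=
    mem_lpMeas_iff_aestronglyMeasurable.mpr (hfm.congr (hf.coeFn_toLp).symm)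
  have hPK : ((K.orthogonalProjectionOnto F : K) : Lp ℝ 2 ν) ∈ K := SetLike.coe_mem _
  have hGmem : F - (K.orthogonalProjectionOnto F : Lp ℝ 2 ν) ∈ lpMeas ℝ ℝ (CLimit μ W k) 2 ν :=
    Submodule.sub_mem _ hFmem (hKle hPK)
  set G := F - (K.orthogonalProjectionOnto F : Lp ℝ 2 ν) with hGdef
  have hGint : Integrable (G : (Fin k → X) → ℝ) ν := (Lp.memLp G).integrable one_le_two
  have hGzero : ∀ n (A : Set (Fin k → X)), MeasurableSet[CSeq μ W k n] A →
      ∫ x in A, G x ∂ν = 0 := by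
    intro n A hA
    have hAν : ν A ≠ ⊤ := measure_ne_top ν A
    have hind : indicatorConstLp 2 (cSeq_le_pi μ W hW n A hA) hAν (1 : ℝ) ∈ K :=
      U.le_topologicalClosure (Submodule.mem_iSup_of_mem n
        (mem_lpMeas_indicatorConstLp (cSeq_le_pi μ W hW n) hA hAν))
    have h0 := K.starProjection_inner_eq_zero F _ hind
    have h1 := L2.inner_indicatorConstLp_one (𝕜 := ℝ) (cSeq_le_pi μ W hW n A hA) hAν G
    rw [← h1, real_inner_comm]
    exact h0
  have hGzero2 : ∀ A : Set (Fin k → X), MeasurableSet[CLimit μ W k] A →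
      ∫ x in A, G x ∂ν = 0 := by
    intro A hA
    obtain ⟨A₀, hA₀, hnull⟩ := cLimit_approx μ W hW hA
    rw [setIntegral_congr_set (measure_symmDiff_eq_zero_iff.mp hnull)]
    exact setIntegral_iSup_zero μ W hW hGint hGzero A₀ hA₀
  have hG0 : (G : (Fin k → X) → ℝ) =ᵐ[ν] 0 :=
    Lp.ae_eq_zero_of_forall_setIntegral_eq_zero' ℝ hm G (by norm_num) (by norm_num)
      (fun s _ _ => hGint.integrableOn) (fun s hs _ => hGzero2 s hs)
      (mem_lpMeas_iff_aestronglyMeasurable.mp hGmem)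
  have hFK : F ∈ K := by
    have hGeq : G = (0 : Lp ℝ 2 ν) := Lp.ext (hG0.trans (Lp.coeFn_zero ℝ 2 ν).symm)
    rw [hGdef, sub_eq_zero] at hGeq
    rw [hGeq]
    exact hPK
  have hFcl : F ∈ closure (U : Set (Lp ℝ 2 ν)) := by
    rwa [← Submodule.topologicalClosure_coe, ← hKdef, SetLike.mem_coe]
  obtain ⟨u, huU, hulim⟩ := mem_closure_iff_seq_limit.mp hFcl
  have hdir : Directed (· ≤ ·) (fun n => lpMeas ℝ ℝ (CSeq μ W k n) 2 ν :
      ℕ → Submodule ℝ (Lp ℝ 2 ν)) := by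
    refine Monotone.directed_le fun a b hab x hx => ?_
    exact mem_lpMeas_iff_aestronglyMeasurable.mpr
      ((mem_lpMeas_iff_aestronglyMeasurable.mp hx).mono (cSeq_mono μ W hab))
  choose m hmem using fun n => (Submodule.mem_iSup_of_directed _ hdir).mp
    (SetLike.mem_coe.mp (huU n))
  set Nf := fun x : Fin k → X => ∫ y, f (Function.update x j y) ∂μ with hNfdef
  have hNfmem : MemLp Nf 2 ν := (N_analysis μ j hf).1
  have huprop : ∀ n, AEStronglyMeasurable[CLimit μ W k]
      (fun x => ∫ y, (u n : (Fin k → X) → ℝ) (Function.update x j y) ∂μ) ν := by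
    intro n
    exact ((nMapsInto_cSeq μ W (m n) j (u n) (Lp.memLp (u n))
      (mem_lpMeas_iff_aestronglyMeasurable.mp (hmem n))).2).mono
      (cSeq_le_cLimit μ W (m n + 1))
  set NG : ℕ → Lp ℝ 2 ν := fun n =>
    MemLp.toLp _ (N_analysis μ j (Lp.memLp (u n))).1 with hNGdef
  have hNGmem : ∀ n, NG n ∈ lpMeas ℝ ℝ (CLimit μ W k) 2 ν := fun n =>
    mem_lpMeas_iff_aestronglyMeasurable.mpr
      ((huprop n).congr (MemLp.coeFn_toLp _).symm)
  set NF : Lp ℝ 2 ν := hNfmem.toLp Nf with hNFdef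
  have htendsto : Filter.Tendsto NG Filter.atTop (nhds NF) := by
    rw [tendsto_iff_norm_sub_tendsto_zero]
    have hb : ∀ n, ‖NG n - NF‖ ≤ ‖u n - F‖ := by
      intro n
      rw [Lp.norm_def, Lp.norm_def]
      have h1 : ((NG n - NF : Lp ℝ 2 ν) : (Fin k → X) → ℝ) =ᵐ[ν]
          (fun x => ∫ y, (u n : (Fin k → X) → ℝ) (Function.update x j y) ∂μ) -
            fun x => ∫ y, f (Function.update x j y) ∂μ := by
        filter_upwards [Lp.coeFn_sub (NG n) NF,
          MemLp.coeFn_toLp (N_analysis μ j (Lp.memLp (u n))).1,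
          MemLp.coeFn_toLp hNfmem] with x e1 e2 e3
        simp only [e1, Pi.sub_apply, e2, e3]
        exact congrArg₂ (· - ·) e2 e3
      have h2 : ((u n - F : Lp ℝ 2 ν) : (Fin k → X) → ℝ) =ᵐ[ν]
          (u n : (Fin k → X) → ℝ) - f := by
        filter_upwards [Lp.coeFn_sub (u n) F, MemLp.coeFn_toLp hf] with x e1 e2
        simp only [e1, Pi.sub_apply, e2]
        exact congrArg (fun t => (u n : (Fin k → X) → ℝ) x - t) e2
      rw [eLpNorm_congr_ae h1, eLpNorm_congr_ae h2]
      exact ENNReal.toReal_mono ((Lp.memLp (u n)).sub hf).2.ne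
        (N_dist μ j (Lp.memLp (u n)) hf)
    have hF0 : Filter.Tendsto (fun n => ‖u n - F‖) Filter.atTop (nhds 0) := by
      rw [← tendsto_iff_norm_sub_tendsto_zero]
      exact hulim
    exact squeeze_zero (fun n => norm_nonneg _) hb hF0
  have hNFmem : NF ∈ lpMeas ℝ ℝ (CLimit μ W k) 2 ν :=
    hlpc.mem_of_tendsto htendsto (Filter.Eventually.of_forall hNGmem)
  exact (mem_lpMeas_iff_aestronglyMeasurable.mp hNFmem).congr (MemLp.coeFn_toLp hNfmem)


end main

/-- The σ-algebra `C^k_W` produced by the iterative construction is the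
minimum `μ^{⊗k}`-relatively complete sub-σ-algebra of `𝓑^{⊗k}` whose `L²` subspace is
invariant under every operator of the family `𝕋^k_W` (all neighbor operators `N_j` and all
adjacency operators `A^W_{ij}`). -/
theorem stmt11 {X : Type*} [MeasurableSpace X] (μ : Measure X) [IsProbabilityMeasure μ]
    {k : ℕ} (hk : 1 ≤ k) (W : X → X → ℝ) (hW : IsGraphon W) :
    (CLimit μ W k ≤ (MeasurableSpace.pi : MeasurableSpace (Fin k → X)) ∧
      RelComplete (mα := (MeasurableSpace.pi : MeasurableSpace (Fin k → X))) (Measure.pi fun _ : Fin k => μ) ⟨CLimit μ W k⟩ ∧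
      AInvariant μ W ⟨CLimit μ W k⟩ ∧
      NMapsInto μ ⟨CLimit μ W k⟩ ⟨CLimit μ W k⟩) ∧
    ∀ m : MeasurableSpace (Fin k → X),
      m ≤ (MeasurableSpace.pi : MeasurableSpace (Fin k → X)) →
      RelComplete (mα := (MeasurableSpace.pi : MeasurableSpace (Fin k → X))) (Measure.pi fun _ : Fin k => μ) ⟨m⟩ →
      AInvariant μ W ⟨m⟩ → NMapsInto μ ⟨m⟩ ⟨m⟩ →
      CLimit μ W k ≤ m := by
  refine ⟨⟨cLimit_le_pi μ W hW, cLimit_relComplete μ W, aInvariant_cLimit μ W hW,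
    nMapsInto_cLimit μ W hW⟩, ?_⟩
  intro m hle hrc hA hN
  have hseq : ∀ n, CSeq μ W k n ≤ m := by
    intro n
    induction n with
    | zero =>
      rw [CSeq]
      exact sInf_le ⟨hle, hrc, hA⟩
    | succ n ih =>
      rw [CSeq]
      exact sInf_le ⟨hle, hrc, ih, fun j f hf hfm => hN j f hf (hfm.mono ih)⟩
  exact sInf_le ⟨hle, hrc, hseq⟩
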